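/- arXiv:2002.12740 — 2 statements merged into one kernel-verified Lean document; each statement's English description precedes it below -/
import Mathlib

section
/- Change-of-variables for the divergence: if u : Ω̂ → Ω is a C² diffeomorphism and F : Ω → ℝᵈ is C¹, then det(∇u(x̂)) (∇·F)(u(x̂)) = ∇̂·(cof(∇u(x̂))ᵀ F(u(x̂))) for all x̂ ∈ Ω̂, using the Piola identity ∇̂·cof(∇u)ᵀ = 0. -/
open Matrix

open Finset in
private lemma adj_expand {d : ℕ} (M : Matrix (Fin d) (Fin d) ℝ) (i j : Fin d) :
    M.adjugate i j = ∑ σ ∈ Finset.univ.filter (fun σ : Equiv.Perm (Fin d) => σ i = j),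
      ((Equiv.Perm.sign σ : ℤ) : ℝ) * ∏ k ∈ Finset.univ.erase i, M (σ k) k := by
  classical
  rw [Matrix.adjugate_apply, Matrix.det_apply',
    ← Finset.sum_filter_add_sum_filter_not Finset.univ (fun σ : Equiv.Perm (Fin d) => σ i = j)]
  have h2 : ∑ σ ∈ Finset.univ.filter (fun σ : Equiv.Perm (Fin d) => ¬ σ i = j),
      ((Equiv.Perm.sign σ : ℤ) : ℝ) * ∏ k, (M.updateRow j (Pi.single i 1)) (σ k) k = 0 := by
    apply Finset.sum_eq_zero
    intro σ hσ
    simp only [Finset.mem_filter] at hσ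
    have hne : σ⁻¹ j ≠ i := by
      intro h; exact hσ.2 (by rw [← h]; simp)
    have : (M.updateRow j (Pi.single i 1)) (σ (σ⁻¹ j)) (σ⁻¹ j) = 0 := by
      simp [Matrix.updateRow_apply, Pi.single_apply, hne]
      exact hne
    have hz : ∏ k, (M.updateRow j (Pi.single i 1)) (σ k) k = 0 :=
      Finset.prod_eq_zero (Finset.mem_univ (σ⁻¹ j)) this
    rw [hz, mul_zero]
  rw [h2, add_zero]
  apply Finset.sum_congr rfl
  intro σ hσ
  simp only [Finset.mem_filter] at hσ
  congr 1
  rw [← Finset.mul_prod_erase Finset.univ _ (Finset.mem_univ i)]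
  have h1 : (M.updateRow j (Pi.single i 1)) (σ i) i = 1 := by
    simp [hσ.2, Matrix.updateRow_apply, Pi.single_apply]
  rw [h1, one_mul]
  apply Finset.prod_congr rfl
  intro k hk
  have hk' : σ k ≠ j := by
    rw [← hσ.2]
    exact fun h => (Finset.mem_erase.mp hk).1 (σ.injective h)
  simp [Matrix.updateRow_apply, hk']

/-- Change of variables for the divergence: if `u` is a `C²` diffeomorphism with
Jacobian `∇u` and `F` is `C¹`, then
`det(∇u xh) (∇·F)(u xh) = ∇̂·( cof(∇u xh)ᵀ F(u xh) )` for all `xh`,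
where `cof A = (adjugate A)ᵀ` is the cofactor matrix. -/
theorem divergence_change_of_variables (d : ℕ)
    (u : (Fin d → ℝ) → (Fin d → ℝ)) (hu : ContDiff ℝ 2 u)
    (hbij : Function.Bijective u)
    (J : (Fin d → ℝ) → Matrix (Fin d) (Fin d) ℝ)
    (hJ : ∀ x, J x = Matrix.of fun i j => fderiv ℝ u x (Pi.single j 1) i)
    (hJinv : ∀ x, IsUnit (J x).det)
    (cof : (Fin d → ℝ) → Matrix (Fin d) (Fin d) ℝ)
    (hcof : ∀ x, cof x = ((J x).adjugate)ᵀ)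
    (F : (Fin d → ℝ) → (Fin d → ℝ)) (hF : ContDiff ℝ 1 F) :
    ∀ xh : Fin d → ℝ,
      (J xh).det * (∑ i, fderiv ℝ F (u xh) (Pi.single i 1) i)
        = ∑ i, fderiv ℝ (fun yh => ((cof yh)ᵀ).mulVec (F (u yh)) i) xh (Pi.single i 1) := by
  classical
  intro xh
  -- basic differentiability
  have hud : Differentiable ℝ u := hu.differentiable (by norm_num)
  have hDu : ContDiff ℝ 1 (fderiv ℝ u) := hu.fderiv_right (by norm_num)
  have hDud : Differentiable ℝ (fderiv ℝ u) := hDu.differentiable one_ne_zero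
  set H : (Fin d → ℝ) →L[ℝ] (Fin d → ℝ) →L[ℝ] (Fin d → ℝ) := fderiv ℝ (fderiv ℝ u) xh with hH
  have Hsymm : ∀ v w : Fin d → ℝ, H v w = H w v := by
    intro v w
    exact (hu.contDiffAt.isSymmSndFDerivAt (by norm_num)) v w
  -- entry functions of the Jacobian
  set a : Fin d → Fin d → (Fin d → ℝ) → ℝ := fun m l x => fderiv ℝ u x (Pi.single l 1) m with ha
  -- derivative CLM for entries
  set T : Fin d → Fin d → (((Fin d → ℝ) →L[ℝ] (Fin d → ℝ)) →L[ℝ] ℝ) := fun l m =>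
    (ContinuousLinearMap.proj m).comp (ContinuousLinearMap.apply ℝ (Fin d → ℝ) (Pi.single l 1)) with hT
  have haT : ∀ m l x, a m l x = T l m (fderiv ℝ u x) := by intro m l x; rfl
  have haD : ∀ m l, HasFDerivAt (a m l) ((T l m).comp H) xh := by
    intro m l
    exact ((T l m).hasFDerivAt).comp xh (hDud xh).hasFDerivAt
  have haDval : ∀ m l v, ((T l m).comp H) v = H v (Pi.single l 1) m := by intro m l v; rfl
  -- sign as a real number
  set sg : Equiv.Perm (Fin d) → ℝ := fun σ => ((Equiv.Perm.sign σ : ℤ) : ℝ) with hsg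
  set filt : Fin d → Fin d → Finset (Equiv.Perm (Fin d)) := fun i j =>
    Finset.univ.filter (fun σ : Equiv.Perm (Fin d) => σ i = j) with hfilt
  -- explicit formula for the adjugate entries as functions of x
  have hadjfun : ∀ i j : Fin d, (fun x => (J x).adjugate i j)
      = fun x => ∑ σ ∈ filt i j, sg σ * ∏ k ∈ Finset.univ.erase i, a (σ k) k x := by
    intro i j
    funext x
    rw [adj_expand]
    apply Finset.sum_congr rfl
    intro σ hσ
    congr 1
    apply Finset.prod_congr rfl
    intro k hk
    rw [hJ]
    rfl
  -- derivative of the adjugate entries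
  set Dadj : Fin d → Fin d → ((Fin d → ℝ) →L[ℝ] ℝ) := fun i j =>
    ∑ σ ∈ filt i j, sg σ • (∑ k ∈ Finset.univ.erase i,
      (∏ k' ∈ (Finset.univ.erase i).erase k, a (σ k') k' xh) • ((T k (σ k)).comp H)) with hDadj
  have hadjD : ∀ i j, HasFDerivAt (fun x => (J x).adjugate i j) (Dadj i j) xh := by
    intro i j
    rw [hadjfun i j]
    exact HasFDerivAt.fun_sum (fun σ _ =>
      (HasFDerivAt.finset_prod (fun k _ => haD (σ k) k)).const_mul (sg σ))
  -- derivative of the composed vector field components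
  set DF : (Fin d → ℝ) →L[ℝ] (Fin d → ℝ) := fderiv ℝ F (u xh) with hDF
  set Db : Fin d → ((Fin d → ℝ) →L[ℝ] ℝ) := fun j =>
    (ContinuousLinearMap.proj j).comp (DF.comp (fderiv ℝ u xh)) with hDb
  have hbD : ∀ j, HasFDerivAt (fun x => F (u x) j) (Db j) xh := by
    intro j
    exact (ContinuousLinearMap.proj j).hasFDerivAt.comp xh
      (((hF.differentiable one_ne_zero (u xh)).hasFDerivAt).comp xh (hud xh).hasFDerivAt)
  -- derivative of g i
  set Dg : Fin d → ((Fin d → ℝ) →L[ℝ] ℝ) := fun i =>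
    ∑ j, ((J xh).adjugate i j • Db j + F (u xh) j • Dadj i j) with hDg
  have hgD : ∀ i, HasFDerivAt (fun x => ∑ j, (J x).adjugate i j * F (u x) j) (Dg i) xh := by
    intro i
    exact HasFDerivAt.fun_sum (fun j _ => (hadjD i j).fun_mul (hbD j))
  -- identify the functions in the statement with g i
  have hfun : ∀ i, (fun yh => ((cof yh)ᵀ).mulVec (F (u yh)) i)
      = fun x => ∑ j, (J x).adjugate i j * F (u x) j := by
    intro i
    funext x
    rw [hcof]
    simp [Matrix.mulVec, dotProduct]
  have hRHS : ∀ i, fderiv ℝ (fun yh => ((cof yh)ᵀ).mulVec (F (u yh)) i) xh (Pi.single i 1)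
      = Dg i (Pi.single i 1) := by
    intro i
    rw [hfun i, (hgD i).fderiv]
  rw [Finset.sum_congr rfl (fun i _ => hRHS i)]
  -- Piola identity
  have hPiola : ∀ j, ∑ i, Dadj i j (Pi.single i 1) = 0 := by
    intro j
    -- scalar form
    simp only [hDadj, ContinuousLinearMap.sum_apply, ContinuousLinearMap.smul_apply,
      smul_eq_mul, haDval]
    -- the summand only depends on σ
    set w : Equiv.Perm (Fin d) → Fin d → ℝ := fun σ k =>
      sg σ * ((∏ k' ∈ (Finset.univ.erase (σ⁻¹ j)).erase k, a (σ k') k' xh)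
        * H (Pi.single (σ⁻¹ j) 1) (Pi.single k 1) (σ k)) with hw
    have step1 : ∀ i, ∑ σ ∈ filt i j,
        sg σ * ∑ k ∈ Finset.univ.erase i,
          (∏ k' ∈ (Finset.univ.erase i).erase k, a (σ k') k' xh)
            * H (Pi.single i 1) (Pi.single k 1) (σ k)
        = ∑ σ ∈ filt i j, ∑ k ∈ Finset.univ.erase (σ⁻¹ j), w σ k := by
      intro i
      apply Finset.sum_congr rfl
      intro σ hσ
      have hiσ : σ⁻¹ j = i := by
        rw [hfilt] at hσ
        simp only [Finset.mem_filter] at hσ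
        rw [← hσ.2]; simp
      rw [Finset.mul_sum]
      apply Finset.sum_congr (by rw [hiσ])
      intro k _
      simp only [hw, hiσ]
    rw [Finset.sum_congr rfl (fun i _ => step1 i)]
    -- collapse the double sum over i and σ
    have step2 : ∑ i, ∑ σ ∈ filt i j, ∑ k ∈ Finset.univ.erase (σ⁻¹ j), w σ k
        = ∑ σ : Equiv.Perm (Fin d), ∑ k ∈ Finset.univ.erase (σ⁻¹ j), w σ k := by
      simp only [hfilt, Finset.sum_filter]
      rw [Finset.sum_comm]
      apply Finset.sum_congr rfl
      intro σ _
      have hcond : ∀ i : Fin d, (σ i = j) = (i = σ⁻¹ j) := by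
        intro i
        apply propext
        constructor
        · intro h; rw [← h]; simp
        · intro h; rw [h]; simp
      simp only [hcond]
      rw [Finset.sum_ite_eq' Finset.univ (σ⁻¹ j)]
      simp
    rw [step2, Finset.sum_sigma']
    -- cancellation via the involution σ ↦ σ * swap (σ⁻¹ j) k
    apply Finset.sum_involution
      (g := fun p _ => (⟨p.1 * Equiv.swap (p.1⁻¹ j) p.2, p.1⁻¹ j⟩ :
        (_ : Equiv.Perm (Fin d)) × Fin d))
    · -- sum of paired terms is zero
      intro p hp
      obtain ⟨σ, k⟩ := p
      simp only [Finset.mem_sigma, Finset.mem_univ, Finset.mem_erase, true_and] at hp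
      have hik : k ≠ σ⁻¹ j := hp.1
      set i := σ⁻¹ j with hi
      set τ := σ * Equiv.swap i k with hτ
      have hτinv : τ⁻¹ j = k := by
        rw [hτ, _root_.mul_inv_rev, Equiv.Perm.mul_apply, Equiv.swap_inv, ← hi,
          Equiv.swap_apply_left]
      have hτi : τ i = σ k := by
        rw [hτ, Equiv.Perm.mul_apply, Equiv.swap_apply_left]
      have hsgτ : sg τ = -sg σ := by
        rw [hsg, hτ]
        simp [Equiv.Perm.sign_swap (Ne.symm hik)]
      have hprod : (∏ k' ∈ (Finset.univ.erase (τ⁻¹ j)).erase i, a (τ k') k' xh)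
          = ∏ k' ∈ (Finset.univ.erase i).erase k, a (σ k') k' xh := by
        rw [hτinv, Finset.erase_right_comm]
        apply Finset.prod_congr rfl
        intro k' hk'
        simp only [Finset.mem_erase] at hk'
        have h1 : k' ≠ i := hk'.2.1
        have h2 : k' ≠ k := hk'.1
        rw [hτ, Equiv.Perm.mul_apply, Equiv.swap_apply_of_ne_of_ne h1 h2]
      have hHsym : H (Pi.single (τ⁻¹ j) 1) (Pi.single i 1) (τ i)
          = H (Pi.single i 1) (Pi.single k 1) (σ k) := by
        rw [hτinv, hτi, Hsymm]
      show w σ k + w τ i = 0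
      simp only [hw]
      rw [hsgτ, hprod, hHsym]
      ring
    · -- the involution has no fixed points on nonzero terms
      intro p hp _
      obtain ⟨σ, k⟩ := p
      simp only [Finset.mem_sigma, Finset.mem_univ, Finset.mem_erase, true_and] at hp
      intro h
      have h2 := congrArg Sigma.snd h
      simp only [] at h2
      exact hp.1 h2.symm
    · -- the involution stays in the index set
      intro p hp
      obtain ⟨σ, k⟩ := p
      simp only [Finset.mem_sigma, Finset.mem_univ, Finset.mem_erase, true_and] at hp ⊢
      refine ⟨?_, trivial⟩
      have hτinv : (σ * Equiv.swap (σ⁻¹ j) k)⁻¹ j = k := by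
        rw [_root_.mul_inv_rev, Equiv.Perm.mul_apply, Equiv.swap_inv, Equiv.swap_apply_left]
      rw [hτinv]
      exact fun h => hp.1 h.symm
    · -- it is an involution
      intro p hp
      obtain ⟨σ, k⟩ := p
      simp only [Finset.mem_sigma, Finset.mem_univ, Finset.mem_erase, true_and] at hp
      have hτinv : (σ * Equiv.swap (σ⁻¹ j) k)⁻¹ j = k := by
        rw [_root_.mul_inv_rev, Equiv.Perm.mul_apply, Equiv.swap_inv, Equiv.swap_apply_left]
      simp only [hτinv]
      congr 1
      rw [Equiv.swap_comm, mul_assoc, Equiv.swap_mul_self, mul_one]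
  -- expand the right-hand side
  have expand : ∑ i, Dg i (Pi.single i 1)
      = (∑ i, ∑ j, (J xh).adjugate i j * Db j (Pi.single i 1))
        + ∑ j, F (u xh) j * ∑ i, Dadj i j (Pi.single i 1) := by
    rw [hDg]
    simp only [ContinuousLinearMap.sum_apply, ContinuousLinearMap.add_apply,
      ContinuousLinearMap.smul_apply, smul_eq_mul, Finset.sum_add_distrib]
    congr 1
    rw [Finset.sum_comm]
    apply Finset.sum_congr rfl
    intro j _
    rw [Finset.mul_sum]
  rw [expand]
  have hz : ∑ j, F (u xh) j * ∑ i, Dadj i j (Pi.single i 1) = 0 := by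
    apply Finset.sum_eq_zero
    intro j _
    rw [hPiola j, mul_zero]
  rw [hz, add_zero]
  -- decompose DF along coordinates
  have hDFdec : ∀ (w : Fin d → ℝ) j, DF w j = ∑ k, w k * DF (Pi.single k 1) j := by
    intro w j
    have hw : w = ∑ k, w k • (Pi.single k 1 : Fin d → ℝ) := by
      funext m
      simp [Pi.single_apply, Finset.sum_ite_eq', mul_comm]
    conv_lhs => rw [hw]
    rw [map_sum]
    simp [smul_eq_mul]
  have hDbval : ∀ i j, Db j (Pi.single i 1) = ∑ k, (J xh k i) * DF (Pi.single k 1) j := by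
    intro i j
    have : Db j (Pi.single i 1) = DF (fderiv ℝ u xh (Pi.single i 1)) j := rfl
    rw [this, hDFdec]
    apply Finset.sum_congr rfl
    intro k _
    rw [hJ]
    rfl
  calc (J xh).det * (∑ i, fderiv ℝ F (u xh) (Pi.single i 1) i)
      = ∑ j, ∑ k, ((J xh) * (J xh).adjugate) k j * DF (Pi.single k 1) j := by
        rw [Matrix.mul_adjugate]
        simp only [Matrix.smul_apply, Matrix.one_apply, smul_eq_mul]
        rw [Finset.mul_sum]
        apply Finset.sum_congr rfl
        intro j _
        rw [Finset.sum_eq_single j]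
        · simp [hDF]
        · intro k _ hk; simp [hk]
        · intro h; exact absurd (Finset.mem_univ j) h
    _ = ∑ i, ∑ j, (J xh).adjugate i j * Db j (Pi.single i 1) := by
        simp only [hDbval, Matrix.mul_apply, Finset.sum_mul, Finset.mul_sum]
        conv_rhs => rw [Finset.sum_comm]
        apply Finset.sum_congr rfl
        intro j _
        rw [Finset.sum_comm]
        apply Finset.sum_congr rfl
        intro i _
        apply Finset.sum_congr rfl
        intro k _
        ring
end

section
/- Piola identity: for any C² map u : Ω̂ ⊂ ℝᵈ → ℝᵈ, each row of the cofactor matrix of the Jacobian is divergence-free: ∇̂ · cof(∇u) = 0 (componentwise), where cof(A) = det(A) A^{-T} when A is invertible, extended polynomially in the entries of A. -/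
open Matrix Finset Equiv

lemma cof_formula {d : ℕ} (A : Matrix (Fin d) (Fin d) ℝ) (i j : Fin d) :
    (A.adjugate)ᵀ i j = ∑ σ : Equiv.Perm (Fin d),
      if σ i = j then ((Equiv.Perm.sign σ : ℤ) : ℝ) * ∏ k ∈ Finset.univ.erase i, A k (σ k) else 0 := by
  rw [transpose_apply, adjugate_apply, ← det_transpose, det_apply']
  refine Finset.sum_congr rfl fun σ _ => ?_
  have h1 : ∀ k : Fin d, (A.updateRow i (Pi.single j 1))ᵀ (σ k) k
      = A.updateRow i (Pi.single j 1) k (σ k) := fun k => rfl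
  rw [← Finset.mul_prod_erase _ _ (Finset.mem_univ i)]
  rw [h1, updateRow_self]
  have h2 : ∏ k ∈ Finset.univ.erase i, (A.updateRow i (Pi.single j 1))ᵀ (σ k) k
      = ∏ k ∈ Finset.univ.erase i, A k (σ k) := by
    refine Finset.prod_congr rfl fun k hk => ?_
    rw [h1, updateRow_ne (Finset.mem_erase.1 hk).1]
  rw [h2, Pi.single_apply]
  by_cases h : σ i = j <;> simp [h]

/-- Piola identity: for a `C²` map `u : ℝᵈ → ℝᵈ`, each row of the cofactor
matrix `cof(∇u) = (adjugate ∇u)ᵀ` of the Jacobian is divergence-free: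
`∑ⱼ ∂ⱼ (cof ∇u)ᵢⱼ = 0` for each `i`. -/
theorem piola_identity (d : ℕ)
    (u : (Fin d → ℝ) → (Fin d → ℝ)) (hu : ContDiff ℝ 2 u)
    (J : (Fin d → ℝ) → Matrix (Fin d) (Fin d) ℝ)
    (hJ : ∀ x, J x = Matrix.of fun i j => fderiv ℝ u x (Pi.single j 1) i)
    (cof : (Fin d → ℝ) → Matrix (Fin d) (Fin d) ℝ)
    (hcof : ∀ x, cof x = ((J x).adjugate)ᵀ) :
    ∀ (x : Fin d → ℝ) (i : Fin d),
      ∑ j, fderiv ℝ (fun y => cof y i j) x (Pi.single j 1) = 0 := by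
  intro x i
  classical
  have hud : Differentiable ℝ u := hu.differentiable (by norm_num)
  have hfd : ContDiff ℝ 1 (fderiv ℝ u) := hu.fderiv_right (le_refl 2)
  have hfd' : Differentiable ℝ (fderiv ℝ u) := hfd.differentiable one_ne_zero
  set g : Fin d → Fin d → (Fin d → ℝ) → ℝ :=
    fun k m y => fderiv ℝ u y (Pi.single m 1) k with hg
  set L : Fin d → Fin d → (((Fin d → ℝ) →L[ℝ] (Fin d → ℝ)) →L[ℝ] ℝ) :=
    fun k m => (ContinuousLinearMap.proj k).comp
      (ContinuousLinearMap.apply ℝ (Fin d → ℝ) (Pi.single m 1)) with hL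
  have hgd : ∀ k m, Differentiable ℝ (g k m) := fun k m =>
    (L k m).differentiable.comp hfd'
  have hderiv : ∀ k m y, fderiv ℝ (g k m) y = (L k m).comp (fderiv ℝ (fderiv ℝ u) y) :=
    fun k m y => ((L k m).hasFDerivAt.comp y (hfd' y).hasFDerivAt).fderiv
  have hsy : ∀ v w, fderiv ℝ (fderiv ℝ u) x v w = fderiv ℝ (fderiv ℝ u) x w v :=
    hu.contDiffAt.isSymmSndFDerivAt (by simp [minSmoothness_of_isRCLikeNormedField])
  have hs : ∀ a b l : Fin d, fderiv ℝ (g l b) x (Pi.single a 1)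
      = fderiv ℝ (g l a) x (Pi.single b 1) := by
    intro a b l
    rw [hderiv, hderiv]
    simp only [ContinuousLinearMap.comp_apply, hL, ContinuousLinearMap.apply_apply,
      ContinuousLinearMap.proj_apply]
    exact congrFun (hsy (Pi.single a 1) (Pi.single b 1)) l
  -- the sign as a real number
  set c : Equiv.Perm (Fin d) → ℝ := fun σ => ((Equiv.Perm.sign σ : ℤ) : ℝ) with hcdef
  -- the product function
  set P : Equiv.Perm (Fin d) → (Fin d → ℝ) → ℝ :=
    fun σ y => ∏ k ∈ Finset.univ.erase i, g k (σ k) y with hP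
  have hPder : ∀ σ : Equiv.Perm (Fin d), HasFDerivAt (P σ)
      (∑ l ∈ Finset.univ.erase i, (∏ k ∈ (Finset.univ.erase i).erase l, g k (σ k) x) •
        fderiv ℝ (g l (σ l)) x) x :=
    fun σ => HasFDerivAt.finset_prod (fun l _ => ((hgd l (σ l)) x).hasFDerivAt)
  have hPd : ∀ σ : Equiv.Perm (Fin d), DifferentiableAt ℝ (P σ) x :=
    fun σ => (hPder σ).differentiableAt
  -- rewrite cof
  have hc : ∀ j, (fun y => cof y i j)
      = fun y => ∑ σ : Equiv.Perm (Fin d), if σ i = j then c σ * P σ y else 0 := by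
    intro j
    funext y
    rw [hcof y, cof_formula]
    refine Finset.sum_congr rfl fun σ _ => ?_
    congr 1
    rw [hP]
    refine congrArg _ (Finset.prod_congr rfl fun k _ => ?_)
    rw [hJ y]
    rfl
  -- differentiate each component
  have key : ∀ j, fderiv ℝ (fun y => cof y i j) x (Pi.single j 1)
      = ∑ σ : Equiv.Perm (Fin d),
          if σ i = j then c σ * fderiv ℝ (P σ) x (Pi.single j 1) else 0 := by
    intro j
    rw [hc j]
    rw [fderiv_fun_sum (fun σ _ => ?_)]
    · rw [ContinuousLinearMap.sum_apply]
      refine Finset.sum_congr rfl fun σ _ => ?_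
      by_cases h : σ i = j
      · simp only [h, if_true]
        rw [fderiv_const_mul (hPd σ)]
        simp
      · simp only [h, if_false]
        rw [fderiv_fun_const]
        simp
    · by_cases h : σ i = j
      · simp only [h, if_true]
        exact (hPd σ).const_mul _
      · simp only [h, if_false]
        exact differentiableAt_const 0
  calc ∑ j, fderiv ℝ (fun y => cof y i j) x (Pi.single j 1)
      = ∑ j, ∑ σ : Equiv.Perm (Fin d),
          if σ i = j then c σ * fderiv ℝ (P σ) x (Pi.single j 1) else 0 :=
        Finset.sum_congr rfl fun j _ => key j
    _ = ∑ σ : Equiv.Perm (Fin d), c σ * fderiv ℝ (P σ) x (Pi.single (σ i) 1) := by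
        rw [Finset.sum_comm]
        refine Finset.sum_congr rfl fun σ _ => ?_
        rw [Finset.sum_ite_eq]
        simp
    _ = ∑ σ : Equiv.Perm (Fin d), c σ * ∑ l ∈ Finset.univ.erase i,
          (∏ k ∈ (Finset.univ.erase i).erase l, g k (σ k) x) *
            fderiv ℝ (g l (σ l)) x (Pi.single (σ i) 1) := by
        refine Finset.sum_congr rfl fun σ _ => ?_
        rw [(hPder σ).fderiv]
        simp [ContinuousLinearMap.sum_apply, ContinuousLinearMap.smul_apply, smul_eq_mul]
    _ = ∑ l ∈ Finset.univ.erase i, ∑ σ : Equiv.Perm (Fin d),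
          c σ * ((∏ k ∈ (Finset.univ.erase i).erase l, g k (σ k) x) *
            fderiv ℝ (g l (σ l)) x (Pi.single (σ i) 1)) := by
        simp_rw [Finset.mul_sum]
        rw [Finset.sum_comm]
    _ = 0 := by
        refine Finset.sum_eq_zero fun l hl => ?_
        have hli : l ≠ i := (Finset.mem_erase.1 hl).1
        have hil : i ≠ l := hli.symm
        set f : Equiv.Perm (Fin d) → ℝ := fun σ =>
          c σ * ((∏ k ∈ (Finset.univ.erase i).erase l, g k (σ k) x) *
            fderiv ℝ (g l (σ l)) x (Pi.single (σ i) 1)) with hf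
        have h1 : ∑ σ : Equiv.Perm (Fin d), f (σ * Equiv.swap i l)
            = ∑ σ : Equiv.Perm (Fin d), f σ :=
          Fintype.sum_equiv (Equiv.mulRight (Equiv.swap i l)) _ f (fun σ => rfl)
        have h2 : ∀ σ : Equiv.Perm (Fin d), f (σ * Equiv.swap i l) = - f σ := by
          intro σ
          have hsign : c (σ * Equiv.swap i l) = - c σ := by
            simp [hcdef, Equiv.Perm.sign_mul, Equiv.Perm.sign_swap hil]
          have hprod : ∏ k ∈ (Finset.univ.erase i).erase l, g k ((σ * Equiv.swap i l) k) x
              = ∏ k ∈ (Finset.univ.erase i).erase l, g k (σ k) x := by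
            refine Finset.prod_congr rfl fun k hk => ?_
            obtain ⟨hkl, hk'⟩ := Finset.mem_erase.1 hk
            have hki := (Finset.mem_erase.1 hk').1
            rw [show (σ * Equiv.swap i l) k = σ k by
              simp [Equiv.Perm.mul_apply, Equiv.swap_apply_of_ne_of_ne hki hkl]]
          have hi' : (σ * Equiv.swap i l) i = σ l := by simp [Equiv.Perm.mul_apply]
          have hl' : (σ * Equiv.swap i l) l = σ i := by simp [Equiv.Perm.mul_apply]
          rw [hf]
          simp only []
          rw [hsign, hprod, hi', hl', hs (σ l) (σ i) l]
          ring
        have h3 : ∑ σ : Equiv.Perm (Fin d), f σ = - ∑ σ : Equiv.Perm (Fin d), f σ := by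
          conv_lhs => rw [← h1]
          rw [Finset.sum_congr rfl (fun σ _ => h2 σ), Finset.sum_neg_distrib]
        linarith
end
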